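/- For every t > 0 and every z ∈ ℂ with Im z > 0, the matrix (𝔄(z)ᴴ · J · 𝔄(z) − J)/(z − z̄) is Hermitian positive semidefinite, where 𝔄(z)ᴴ denotes the conjugate transpose of 𝔄(z) and z̄ the complex conjugate of z (so z − z̄ = 2i·Im z). -/

import Mathlib

open Matrix
open scoped ComplexOrder

/-- The matrix `A₁(z)` of formula (6.1), written in terms of a square root `w` of `z`. -/
noncomputable def matA1 (t : ℝ) (w : ℂ) : Matrix (Fin 2) (Fin 2) ℂ :=
  !![Complex.cos (t * w), Complex.sin (t * w) / w;
     -w * Complex.sin (t * w), Complex.cos (t * w)]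

/-- The matrix `A₂(z)` of formula (6.1). -/
noncomputable def matA2 (z : ℂ) : Matrix (Fin 2) (Fin 2) ℂ :=
  !![Complex.cos z, Complex.sin z;
     -Complex.sin z, Complex.cos z]

/-- The matrix `J = [[0, −1], [1, 0]]`. -/
noncomputable def matJ : Matrix (Fin 2) (Fin 2) ℂ :=
  !![0, -1; 1, 0]

open Complex in
/-- 2×2 positive semidefiniteness criterion. -/
lemma aux_psd2 (a d X Y : ℝ) (ha : 0 ≤ a) (hd : 0 ≤ d) (hbd : X^2 + Y^2 ≤ a*d) :
    Matrix.PosSemidef !![(a:ℂ), (X:ℂ)+Y*I; (X:ℂ)-Y*I, (d:ℂ)] := by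
  have hherm : Matrix.IsHermitian !![(a:ℂ), (X:ℂ)+Y*I; (X:ℂ)-Y*I, (d:ℂ)] := by
    ext i j
    fin_cases i <;> fin_cases j <;>
      simp [Matrix.conjTranspose_apply, Complex.conj_ofReal] <;> ring
  refine Matrix.PosSemidef.of_dotProduct_mulVec_nonneg hherm fun x => ?_
  set b : ℂ := (X:ℂ)+Y*I with hb
  have hnb : Complex.normSq b = X^2 + Y^2 := by
    simp [hb, Complex.normSq_apply]; ring
  set s := x 0
  set r := x 1
  have hq : star x ⬝ᵥ (!![(a:ℂ), b; (X:ℂ)-Y*I, (d:ℂ)] *ᵥ x)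
      = ((a * Complex.normSq s + d * Complex.normSq r
          + 2 * ((starRingEnd ℂ) s * b * r).re : ℝ) : ℂ) := by
    have hsb : ((X:ℂ)-Y*I) = (starRingEnd ℂ) b := by simp [hb, Complex.conj_ofReal]; ring
    rw [hsb]
    have : star x ⬝ᵥ (!![(a:ℂ), b; (starRingEnd ℂ) b, (d:ℂ)] *ᵥ x)
        = (a:ℂ) * ((starRingEnd ℂ) s * s) + (d:ℂ) * ((starRingEnd ℂ) r * r)
          + (((starRingEnd ℂ) s * b * r) + (starRingEnd ℂ) ((starRingEnd ℂ) s * b * r)) := by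
      simp [dotProduct, Matrix.mulVec, Fin.sum_univ_two, Matrix.star_apply,
        _root_.map_mul]
      ring
    rw [this, Complex.add_conj, ← Complex.normSq_eq_conj_mul_self,
      ← Complex.normSq_eq_conj_mul_self]
    push_cast
    ring
  rw [hq]
  rw [Complex.zero_le_real]
  have h1 : ((starRingEnd ℂ) s * b * r).re ^ 2 ≤ a * d * (Complex.normSq s * Complex.normSq r) := by
    have h2 : ((starRingEnd ℂ) s * b * r).re ^ 2 ≤ Complex.normSq ((starRingEnd ℂ) s * b * r) := by
      rw [Complex.normSq_apply]; nlinarith [sq_nonneg ((starRingEnd ℂ) s * b * r).im]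
    have h3 : Complex.normSq ((starRingEnd ℂ) s * b * r)
        = Complex.normSq b * (Complex.normSq s * Complex.normSq r) := by
      simp [Complex.normSq_mul]; ring
    nlinarith [Complex.normSq_nonneg s, Complex.normSq_nonneg r,
      mul_nonneg (Complex.normSq_nonneg s) (Complex.normSq_nonneg r)]
  nlinarith [Complex.normSq_nonneg s, Complex.normSq_nonneg r,
    mul_nonneg ha (Complex.normSq_nonneg s), mul_nonneg hd (Complex.normSq_nonneg r),
    sq_nonneg (a * Complex.normSq s - d * Complex.normSq r)]

open Complex in
lemma aux_cos_expand (x y : ℝ) : Complex.cos ((x:ℂ) + y*I)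
    = ((Real.cos x * Real.cosh y : ℝ) : ℂ) - ((Real.sin x * Real.sinh y : ℝ) : ℂ) * I := by
  rw [Complex.cos_add, Complex.cos_mul_I, Complex.sin_mul_I]
  push_cast [← Complex.ofReal_cos, ← Complex.ofReal_sin, ← Complex.ofReal_cosh,
    ← Complex.ofReal_sinh]
  ring

open Complex in
lemma aux_sin_expand (x y : ℝ) : Complex.sin ((x:ℂ) + y*I)
    = ((Real.sin x * Real.cosh y : ℝ) : ℂ) + ((Real.cos x * Real.sinh y : ℝ) : ℂ) * I := by
  rw [Complex.sin_add, Complex.cos_mul_I, Complex.sin_mul_I]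
  push_cast [← Complex.ofReal_cos, ← Complex.ofReal_sin, ← Complex.ofReal_cosh,
    ← Complex.ofReal_sinh]
  ring

open Complex in
/-- Explicit form of the `A₂` contribution. -/
lemma aux_matA2_part (z : ℂ) (hy : z.im ≠ 0) :
    (z - (starRingEnd ℂ) z)⁻¹ • ((matA2 z)ᴴ * matJ * matA2 z - matJ)
      = !![((Real.sinh z.im * Real.cosh z.im / z.im : ℝ) : ℂ),
           ((0:ℝ):ℂ) + ((Real.sinh z.im ^ 2 / z.im : ℝ) : ℂ) * I;
           ((0:ℝ):ℂ) - ((Real.sinh z.im ^ 2 / z.im : ℝ) : ℂ) * I,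
           ((Real.sinh z.im * Real.cosh z.im / z.im : ℝ) : ℂ)] := by
  set x := z.re
  set y := z.im
  have hz : z = (x:ℂ) + y*I := (Complex.re_add_im z).symm
  have hc : z - (starRingEnd ℂ) z = (2*y:ℝ)*I := by
    rw [Complex.sub_conj]
  have hyc : ((y:ℝ):ℂ) ≠ 0 := Complex.ofReal_ne_zero.mpr hy
  have hcos := aux_cos_expand x y
  have hsin := aux_sin_expand x y
  have hpyth : Real.sin x ^ 2 = 1 - Real.cos x ^ 2 := by
    nlinarith [Real.sin_sq_add_cos_sq x]
  have hcosh : Real.cosh y ^ 2 = 1 + Real.sinh y ^ 2 := by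
    nlinarith [Real.cosh_sq y]
  rw [hc]
  ext i j
  fin_cases i <;> fin_cases j <;>
  · simp only [matA2, matJ, Matrix.smul_apply, Matrix.sub_apply, Matrix.mul_apply,
      Matrix.conjTranspose_apply, Fin.sum_univ_two, Matrix.cons_val', Matrix.cons_val_zero,
      Matrix.cons_val_one, Matrix.head_cons, Matrix.head_fin_const, Matrix.empty_val',
      Matrix.cons_val_fin_one, Matrix.of_apply, Matrix.star_apply, Fin.mk_zero, Fin.mk_one,
      smul_eq_mul]
    rw [hz]
    rw [hcos, hsin]
    simp only [star_sub, star_add, star_mul', star_neg, star_one, star_zero,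
      Complex.star_def, Complex.conj_ofReal, Complex.conj_I]
    push_cast [-Complex.ofReal_sin, -Complex.ofReal_cos, -Complex.ofReal_sinh,
      -Complex.ofReal_cosh]
    field_simp
    rw [Complex.ext_iff]
    constructor <;>
      simp [Complex.sin_ofReal_re, Complex.cos_ofReal_re, Complex.sinh_ofReal_re,
        Complex.cosh_ofReal_re, Complex.sin_ofReal_im, Complex.cos_ofReal_im,
        Complex.sinh_ofReal_im, Complex.cosh_ofReal_im, pow_two] <;>
      first
        | tauto
        | (ring_nf; first | done | (simp only [hcosh, hpyth]; ring1))
        | (left; ring_nf; first | done | (simp only [hcosh, hpyth]; ring1))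

open Complex in
set_option maxHeartbeats 3200000 in
/-- Explicit form of the `A₁` contribution. -/
lemma aux_matA1_part (t u v : ℝ) (hu : u ≠ 0) (hv : v ≠ 0) :
    (((4*u*v:ℝ):ℂ)*I)⁻¹ • ((matA1 t ((u:ℂ)+v*I))ᴴ * matJ * matA1 t ((u:ℂ)+v*I) - matJ)
      = !![((Real.sin (t*u) * Real.cos (t*u) / (2*u)
              + Real.sinh (t*v) * Real.cosh (t*v) / (2*v) : ℝ) : ℂ),
           (((Real.sinh (t*v)^2 + Real.sin (t*u)^2) / (2*(u^2+v^2)) : ℝ) : ℂ)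
             + ((-(Real.sin (t*u)^2 - Real.sinh (t*v)^2
                  - (u^2-v^2) * (Real.sinh (t*v)^2 + Real.sin (t*u)^2)/(u^2+v^2))/(4*u*v) : ℝ) : ℂ) * I;
           (((Real.sinh (t*v)^2 + Real.sin (t*u)^2) / (2*(u^2+v^2)) : ℝ) : ℂ)
             - ((-(Real.sin (t*u)^2 - Real.sinh (t*v)^2
                  - (u^2-v^2) * (Real.sinh (t*v)^2 + Real.sin (t*u)^2)/(u^2+v^2))/(4*u*v) : ℝ) : ℂ) * I,
           (((Real.sinh (t*v) * Real.cosh (t*v) / (2*v)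
              - Real.sin (t*u) * Real.cos (t*u) / (2*u)) / (u^2+v^2) : ℝ) : ℂ)] := by
  have harg : (t:ℂ)*((u:ℂ)+v*I) = ((t*u:ℝ):ℂ) + ((t*v:ℝ):ℂ)*I := by push_cast; ring
  have hcos : Complex.cos ((t:ℂ)*((u:ℂ)+v*I))
      = ((Real.cos (t*u) * Real.cosh (t*v) : ℝ) : ℂ)
        - ((Real.sin (t*u) * Real.sinh (t*v) : ℝ) : ℂ) * I := by rw [harg, aux_cos_expand]
  have hsin : Complex.sin ((t:ℂ)*((u:ℂ)+v*I))
      = ((Real.sin (t*u) * Real.cosh (t*v) : ℝ) : ℂ)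
        + ((Real.cos (t*u) * Real.sinh (t*v) : ℝ) : ℂ) * I := by rw [harg, aux_sin_expand]
  have hpyth : Real.sin (t*u) ^ 2 = 1 - Real.cos (t*u) ^ 2 := by
    nlinarith [Real.sin_sq_add_cos_sq (t*u)]
  have hcosh : Real.cosh (t*v) ^ 2 = 1 + Real.sinh (t*v) ^ 2 := by
    nlinarith [Real.cosh_sq (t*v)]
  have huc : ((u:ℝ):ℂ) ≠ 0 := Complex.ofReal_ne_zero.mpr hu
  have hvc : ((v:ℝ):ℂ) ≠ 0 := Complex.ofReal_ne_zero.mpr hv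
  have hw : ((u:ℂ)+v*I) ≠ 0 := by
    intro h
    exact hu (by simpa using congrArg Complex.re h)
  have hwc : ((u:ℂ) - v*I) ≠ 0 := by
    intro h
    exact hu (by simpa using congrArg Complex.re h)
  have hσ : ((u:ℂ)^2+(v:ℂ)^2) ≠ 0 := by
    intro h
    have : ((u^2+v^2 : ℝ) : ℂ) = 0 := by push_cast; exact h
    rw [Complex.ofReal_eq_zero] at this
    nlinarith [sq_nonneg u, sq_nonneg v, _root_.sq_abs u, abs_pos.mpr hu]
  have hσr : (u^2+v^2 : ℝ) ≠ 0 := by positivity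
  have hσr' : (u*u+v*v : ℝ) ≠ 0 := by
    nlinarith [sq_nonneg u, sq_nonneg v, _root_.sq_abs u, abs_pos.mpr hu]
  set cr := Real.cos (t*u) with hcr
  set sr := Real.sin (t*u) with hsr
  set ch := Real.cosh (t*v) with hch
  set sh := Real.sinh (t*v) with hsh
  ext i j
  fin_cases i <;> fin_cases j <;>
  · simp only [matA1, matJ, Matrix.smul_apply, Matrix.sub_apply, Matrix.mul_apply,
      Matrix.conjTranspose_apply, Fin.sum_univ_two, Matrix.cons_val', Matrix.cons_val_zero,
      Matrix.cons_val_one, Matrix.head_cons, Matrix.head_fin_const, Matrix.empty_val',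
      Matrix.cons_val_fin_one, Matrix.of_apply, Matrix.star_apply, Fin.mk_zero, Fin.mk_one,
      smul_eq_mul]
    rw [hcos, hsin]
    simp only [star_sub, star_add, star_mul', star_neg, star_one, star_zero, star_div₀,
      Complex.star_def, Complex.conj_ofReal, Complex.conj_I]
    push_cast [-Complex.ofReal_sin, -Complex.ofReal_cos, -Complex.ofReal_sinh,
      -Complex.ofReal_cosh]
    field_simp [hwc]
    rw [Complex.ext_iff]
    constructor <;>
      simp [pow_two, Complex.div_re, Complex.div_im, Complex.normSq_apply] <;>
      (try field_simp [hσr']) <;>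
      first
        | tauto
        | (ring_nf; first | done | (simp only [hcosh, hpyth]; ring1))
        | (left; ring_nf; first | done | (simp only [hcosh, hpyth]; ring1))

/-- `A₁(−w) = A₁(w)`. -/
lemma aux_matA1_neg (t : ℝ) (w : ℂ) : matA1 t (-w) = matA1 t w := by
  unfold matA1
  ext i j
  fin_cases i <;> fin_cases j <;>
    simp [mul_neg, Complex.sin_neg, Complex.cos_neg, neg_div_neg_eq] <;> ring

/-- The decomposition of the full quadratic form. -/
lemma aux_decomp (c : ℂ) (A B M : Matrix (Fin 2) (Fin 2) ℂ) :
    c⁻¹ • ((A*B)ᴴ * M * (A*B) - M)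
      = Bᴴ * (c⁻¹ • (Aᴴ*M*A - M)) * B + c⁻¹ • (Bᴴ*M*B - M) := by
  have h : (A*B)ᴴ * M * (A*B) - M = Bᴴ * (Aᴴ*M*A - M) * B + (Bᴴ*M*B - M) := by
    rw [Matrix.conjTranspose_mul]
    noncomm_ring
  rw [h, smul_add, Matrix.mul_smul, Matrix.smul_mul]

set_option maxHeartbeats 1600000 in
theorem matA_J_posSemidef (t : ℝ) (ht : 0 < t) (z w : ℂ) (hz : 0 < z.im) (hw : w ^ 2 = z) :
    Matrix.PosSemidef
      ((z - (starRingEnd ℂ) z)⁻¹ •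
        ((matA1 t w * matA2 z)ᴴ * matJ * (matA1 t w * matA2 z) - matJ)) := by
  -- basic positivity facts about re/im of w
  have him : z.im = 2*(w.re*w.im) := by
    rw [← hw]
    simp [pow_two, Complex.mul_im]
    ring
  have huv : 0 < w.re * w.im := by linarith
  -- normalize the square root to the first quadrant
  obtain ⟨u, v, hu, hv, hww⟩ : ∃ u v : ℝ, 0 < u ∧ 0 < v ∧
      (w = (u:ℂ)+v*Complex.I ∨ w = -((u:ℂ)+v*Complex.I)) := by
    rcases lt_or_ge 0 w.re with hre | hre
    · exact ⟨w.re, w.im, hre, by nlinarith, Or.inl (Complex.re_add_im w).symm⟩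
    · have hre' : w.re < 0 := by
        rcases lt_or_eq_of_le hre with h | h
        · exact h
        · exfalso
          rw [h, zero_mul] at huv
          exact absurd huv (lt_irrefl 0)
      refine ⟨-w.re, -w.im, by linarith, by nlinarith, Or.inr ?_⟩
      push_cast
      linear_combination -Complex.re_add_im w
  have hA1 : matA1 t w = matA1 t ((u:ℂ)+v*Complex.I) := by
    rcases hww with h | h
    · rw [h]
    · rw [h, aux_matA1_neg]
  have hz2 : z = ((u:ℂ)+v*Complex.I)^2 := by
    rw [← hw]
    rcases hww with h | h
    · rw [h]
    · rw [h]; ring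
  have hzim : z.im = 2*(u*v) := by
    rw [hz2]
    simp [pow_two, Complex.mul_im]
    ring
  have hc : z - (starRingEnd ℂ) z = ((4*u*v:ℝ):ℂ)*Complex.I := by
    rw [Complex.sub_conj, hzim]
    norm_num
    ring
  have hyne : z.im ≠ 0 := ne_of_gt hz
  rw [hA1, aux_decomp]
  apply Matrix.PosSemidef.add
  · -- the A₁ part, conjugated by A₂
    rw [hc, aux_matA1_part t u v (ne_of_gt hu) (ne_of_gt hv)]
    set sr := Real.sin (t*u)
    set cr := Real.cos (t*u)
    set sh := Real.sinh (t*v)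
    set ch := Real.cosh (t*v)
    have hsr_abs : |sr| ≤ t*u := by
      have h := Real.abs_sin_le_abs (x := t*u)
      rwa [abs_of_pos (mul_pos ht hu)] at h
    have hcr_abs : |cr| ≤ 1 := Real.abs_cos_le_one _
    have hsh_ge : t*v ≤ sh := Real.self_le_sinh_iff.mpr (by positivity)
    have hch_ge : 1 ≤ ch := Real.one_le_cosh _
    have hsrcr_lb : -(t*u) ≤ sr*cr := by
      nlinarith [neg_abs_le (sr*cr), abs_mul sr cr, abs_nonneg sr, abs_nonneg cr,
        mul_le_mul_of_nonneg_left hcr_abs (abs_nonneg sr)]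
    have hsrcr_ub : sr*cr ≤ t*u := by
      nlinarith [le_abs_self (sr*cr), abs_mul sr cr, abs_nonneg sr, abs_nonneg cr,
        mul_le_mul_of_nonneg_left hcr_abs (abs_nonneg sr)]
    have hshch : t*v ≤ sh*ch := by
      have hsh0 : (0:ℝ) ≤ sh := le_trans (by positivity) hsh_ge
      nlinarith [mul_le_mul_of_nonneg_left hch_ge hsh0]
    have ha : 0 ≤ sr * cr / (2*u) + sh * ch / (2*v) := by
      rw [div_add_div _ _ (by positivity : (2*u:ℝ) ≠ 0) (by positivity : (2*v:ℝ) ≠ 0),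
        le_div_iff₀ (by positivity)]
      nlinarith [mul_le_mul_of_nonneg_right hsrcr_lb (by positivity : (0:ℝ) ≤ 2*v),
        mul_le_mul_of_nonneg_right hshch (by positivity : (0:ℝ) ≤ 2*u)]
    have hd : 0 ≤ (sh * ch / (2*v) - sr * cr / (2*u)) / (u^2+v^2) := by
      apply div_nonneg _ (by positivity)
      rw [div_sub_div _ _ (by positivity : (2*v:ℝ) ≠ 0) (by positivity : (2*u:ℝ) ≠ 0),
        le_div_iff₀ (by positivity)]
      nlinarith [mul_le_mul_of_nonneg_right hsrcr_ub (by positivity : (0:ℝ) ≤ 2*v),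
        mul_le_mul_of_nonneg_right hshch (by positivity : (0:ℝ) ≤ 2*u)]
    have hdet : ((sh^2 + sr^2) / (2*(u^2+v^2)))^2
        + (-(sr^2 - sh^2 - (u^2-v^2) * (sh^2 + sr^2)/(u^2+v^2))/(4*u*v))^2
        ≤ (sr * cr / (2*u) + sh * ch / (2*v))
          * ((sh * ch / (2*v) - sr * cr / (2*u)) / (u^2+v^2)) := by
      have hch2 : ch^2 = 1 + sh^2 := by nlinarith [Real.cosh_sq (t*v)]
      have hcr2 : cr^2 = 1 - sr^2 := by nlinarith [Real.sin_sq_add_cos_sq (t*u)]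
      have key : (sr * cr / (2*u) + sh * ch / (2*v))
            * ((sh * ch / (2*v) - sr * cr / (2*u)) / (u^2+v^2))
          - (((sh^2 + sr^2) / (2*(u^2+v^2)))^2
            + (-(sr^2 - sh^2 - (u^2-v^2) * (sh^2 + sr^2)/(u^2+v^2))/(4*u*v))^2)
          = (u^2*(sh*ch)^2 - v^2*(sr*cr)^2 - u^2*sh^4 - v^2*sr^4)
            / (4*u^2*v^2*(u^2+v^2)) := by
        field_simp
        ring
      have e1 : u^2*(sh*ch)^2 - v^2*(sr*cr)^2 - u^2*sh^4 - v^2*sr^4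
          = u^2*sh^2 - v^2*sr^2 := by
        linear_combination (u^2*sh^2)*hch2 - (v^2*sr^2)*hcr2
      have hsr2 : sr^2 ≤ (t*u)^2 := by
        nlinarith [abs_nonneg sr, _root_.sq_abs sr]
      have hsh2 : (t*v)^2 ≤ sh^2 := by
        nlinarith [hsh_ge, mul_pos ht hv]
      have hnum : 0 ≤ u^2*(sh*ch)^2 - v^2*(sr*cr)^2 - u^2*sh^4 - v^2*sr^4 := by
        rw [e1]
        nlinarith [mul_le_mul_of_nonneg_left hsr2 (sq_nonneg v),
          mul_le_mul_of_nonneg_left hsh2 (sq_nonneg u)]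
      nlinarith [div_nonneg hnum (by positivity : (0:ℝ) ≤ 4*u^2*v^2*(u^2+v^2))]
    exact (aux_psd2 _ _ _ _ ha hd hdet).conjTranspose_mul_mul_same _
  · -- the A₂ part
    rw [aux_matA2_part z hyne]
    set y := z.im
    have hy : 0 < y := hz
    have hsh : 0 < Real.sinh y := Real.sinh_pos_iff.mpr hy
    have hch : 1 ≤ Real.cosh y := Real.one_le_cosh y
    have ha : 0 ≤ Real.sinh y * Real.cosh y / y := by positivity
    have hdet : (0:ℝ)^2 + (Real.sinh y ^ 2 / y)^2
        ≤ (Real.sinh y * Real.cosh y / y) * (Real.sinh y * Real.cosh y / y) := by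
      have hch2 : Real.cosh y ^2 = 1 + Real.sinh y^2 := by nlinarith [Real.cosh_sq y]
      have h1 : (Real.sinh y^2)^2 ≤ (Real.sinh y * Real.cosh y)^2 := by nlinarith
      calc (0:ℝ)^2 + (Real.sinh y ^ 2 / y)^2 = (Real.sinh y^2)^2/y^2 := by ring
        _ ≤ (Real.sinh y * Real.cosh y)^2/y^2 := by
            exact div_le_div_of_nonneg_right h1 (by positivity)
        _ = (Real.sinh y * Real.cosh y / y) * (Real.sinh y * Real.cosh y / y) := by ring
    exact aux_psd2 _ _ _ _ ha ha hdet
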